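/- A nonzero real number z is an eigenvalue of the monodromy of an n-periodic properly bounded difference operator D if and only if z⁻¹ is an eigenvalue of the monodromy of the dual operator D*. -/

import Mathlib

/-- The space of `z`-quasiperiodic bi-infinite real sequences: `ξ_{k+n} = z ξ_k`. -/
def quasiPeriodic (n : ℕ) (z : ℝ) : Submodule ℝ (ℤ → ℝ) where
  carrier := {ξ | ∀ k : ℤ, ξ (k + n) = z * ξ k}
  add_mem' := by
    intro ξ η hξ hη k
    simp only [Pi.add_apply, hξ k, hη k]
    ring
  zero_mem' := by intro k; simp
  smul_mem' := by
    intro c ξ hξ k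
    simp only [Pi.smul_apply, smul_eq_mul, hξ k]
    ring

/-- The difference operator `(Dξ)_k = Σ_{j=m}^{m+d} a_k^j ξ_{k+j}`. -/
def diffOp (m : ℤ) (d : ℕ) (a : ℤ → ℤ → ℝ) : (ℤ → ℝ) →ₗ[ℝ] (ℤ → ℝ) where
  toFun ξ := fun k => ∑ i ∈ Finset.range (d + 1), a k (m + i) * ξ (k + (m + i))
  map_add' ξ η := by
    funext k
    simp [Pi.add_apply, mul_add, Finset.sum_add_distrib]
  map_smul' c ξ := by
    funext k
    simp only [Pi.smul_apply, smul_eq_mul, RingHom.id_apply, Finset.mul_sum]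
    exact Finset.sum_congr rfl fun i _ => by ring

/-- The dual difference operator `(D*ξ)_k = Σ_{j=m}^{m+d} a_{k-j}^j ξ_{k-j}`. -/
def diffOpDual (m : ℤ) (d : ℕ) (a : ℤ → ℤ → ℝ) : (ℤ → ℝ) →ₗ[ℝ] (ℤ → ℝ) where
  toFun ξ := fun k => ∑ i ∈ Finset.range (d + 1), a (k - (m + i)) (m + i) * ξ (k - (m + i))
  map_add' ξ η := by
    funext k
    simp [Pi.add_apply, mul_add, Finset.sum_add_distrib]
  map_smul' c ξ := by
    funext k
    simp only [Pi.smul_apply, smul_eq_mul, RingHom.id_apply, Finset.mul_sum]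
    exact Finset.sum_congr rfl fun i _ => by ring

lemma mem_qp (n : ℕ) (z : ℝ) (ξ : ℤ → ℝ) :
    ξ ∈ quasiPeriodic n z ↔ ∀ k : ℤ, ξ (k + n) = z * ξ k := Iff.rfl

lemma periodic_sum_shift_one (n : ℕ) (f : ℤ → ℝ) (hf : ∀ k, f (k + n) = f k) (c : ℤ) :
    ∑ k ∈ Finset.range n, f (k + (c + 1)) = ∑ k ∈ Finset.range n, f (k + c) := by
  have h1 : ∑ k ∈ Finset.range (n + 1), f (k + c) =
      (∑ k ∈ Finset.range n, f ((k + 1 : ℕ) + c)) + f ((0 : ℕ) + c) :=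
    Finset.sum_range_succ' (fun k => f ((k : ℤ) + c)) n
  have h2 : ∑ k ∈ Finset.range (n + 1), f (k + c) =
      (∑ k ∈ Finset.range n, f (k + c)) + f ((n : ℤ) + c) := Finset.sum_range_succ _ n
  have h3 : f ((n : ℤ) + c) = f ((0 : ℕ) + c) := by
    have := hf c
    simpa [add_comm] using this
  have h4 : (∑ k ∈ Finset.range n, f ((k + 1 : ℕ) + c)) = ∑ k ∈ Finset.range n, f (k + c) := by
    have := h1.symm.trans h2
    rw [h3] at this
    linarith
  rw [← h4]
  exact Finset.sum_congr rfl fun k _ => by push_cast; ring_nf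

lemma periodic_sum_shift (n : ℕ) (f : ℤ → ℝ) (hf : ∀ k, f (k + n) = f k) (c : ℤ) :
    ∑ k ∈ Finset.range n, f (k + c) = ∑ k ∈ Finset.range n, f k := by
  induction c using Int.induction_on with
  | zero => simp
  | succ q ih => rw [periodic_sum_shift_one n f hf q]; exact ih
  | pred q ih =>
      have h := periodic_sum_shift_one n f hf (-(q + 1))
      have e1 : (-(q:ℤ) - 1) = -((q:ℤ)+1) := by ring
      have e2 : (-((q:ℤ)+1) + 1) = -(q:ℤ) := by ring
      rw [e2] at h
      rw [e1, ← h]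
      exact ih

lemma quasi_zpow (n : ℕ) (z : ℝ) (hz : z ≠ 0) (ξ : ℤ → ℝ)
    (hξ : ∀ k : ℤ, ξ (k + n) = z * ξ k) (q k : ℤ) :
    ξ (k + q * n) = z ^ q * ξ k := by
  induction q using Int.induction_on with
  | zero => simp
  | succ q ih =>
      have : (k + ((q : ℤ) + 1) * n) = (k + q * n) + n := by ring
      rw [this, hξ, ih, zpow_add_one₀ hz]
      ring
  | pred q ih =>
      have h1 : (k + (-(q : ℤ) - 1) * n) + n = k + (-(q : ℤ)) * n := by ring
      have := hξ (k + (-(q : ℤ) - 1) * n)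
      rw [h1, ih] at this
      have hzq : z ^ (-(q : ℤ) - 1) = z⁻¹ * z ^ (-(q : ℤ)) := by
        rw [← zpow_neg_one z, ← zpow_add₀ hz]
        ring_nf
      rw [hzq]
      field_simp at this ⊢
      linarith [this]

lemma quasi_eq_zero (n : ℕ) (hn : 1 ≤ n) (z : ℝ) (hz : z ≠ 0) (ξ : ℤ → ℝ)
    (hξ : ∀ k : ℤ, ξ (k + n) = z * ξ k)
    (h0 : ∀ i ∈ Finset.range n, ξ (i : ℤ) = 0) : ξ = 0 := by
  funext k
  have hn0 : (0:ℤ) < n := by exact_mod_cast hn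
  have hk : k = (k % n) + (k / n) * n := by
    rw [mul_comm]; exact (Int.emod_add_mul_ediv k n).symm
  have hmod0 : (0:ℤ) ≤ k % n := Int.emod_nonneg k (by positivity)
  have hmodlt : k % n < n := Int.emod_lt_of_pos k hn0
  have hi : ((k % n).toNat : ℤ) = k % n := Int.toNat_of_nonneg hmod0
  have hmem : (k % n).toNat ∈ Finset.range n := by
    rw [Finset.mem_range]
    omega
  have h1 : ξ (k % n) = 0 := by rw [← hi]; exact h0 _ hmem
  rw [hk, quasi_zpow n z hz ξ hξ, h1]
  simp

noncomputable def extendQ (n : ℕ) (z : ℝ) (v : ℕ → ℝ) : ℤ → ℝ :=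
  fun k => z ^ (k / (n:ℤ)) * v (k % (n:ℤ)).toNat

lemma extendQ_mem (n : ℕ) (hn : 1 ≤ n) (z : ℝ) (hz : z ≠ 0) (v : ℕ → ℝ) :
    ∀ k : ℤ, extendQ n z v (k + n) = z * extendQ n z v k := by
  intro k
  have hn0 : (n:ℤ) ≠ 0 := by exact_mod_cast Nat.one_le_iff_ne_zero.mp hn
  have h1 : (k + n) / n = k / n + 1 := by
    have := Int.add_mul_ediv_right k 1 hn0
    simpa using this
  have h2 : (k + n) % n = k % n := by
    simpa using Int.add_mul_emod_self (a := k) (b := 1) (c := (n:ℤ))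
  unfold extendQ
  rw [h1, h2, zpow_add_one₀ hz]
  ring

lemma extendQ_eq (n : ℕ) (z : ℝ) (v : ℕ → ℝ) (i : ℕ) (hi : i < n) :
    extendQ n z v (i : ℤ) = v i := by
  have h1 : (i : ℤ) / n = 0 := Int.ediv_eq_zero_of_lt (by positivity) (by exact_mod_cast hi)
  have h2 : (i : ℤ) % n = i := Int.emod_eq_of_lt (by positivity) (by exact_mod_cast hi)
  unfold extendQ
  rw [h1, h2]
  simp

lemma pair_delta (n : ℕ) (z : ℝ) (g : ℤ → ℝ) (i : ℕ) (hi : i ∈ Finset.range n) :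
    ∑ k ∈ Finset.range n, extendQ n z (fun j => if j = i then 1 else 0) (k : ℤ) * g k = g i := by
  rw [Finset.sum_eq_single i]
  · rw [extendQ_eq n z _ i (Finset.mem_range.mp hi)]; simp
  · intro b hb hbi
    rw [extendQ_eq n z _ b (Finset.mem_range.mp hb)]
    simp [hbi]
  · intro h; exact absurd hi h

lemma adjoint_pairing (n : ℕ) (m : ℤ) (d : ℕ) (a : ℤ → ℤ → ℝ)
    (hper : ∀ k j : ℤ, a (k + n) j = a k j) (z : ℝ) (hz : z ≠ 0)
    (ξ η : ℤ → ℝ) (hξ : ∀ k : ℤ, ξ (k + n) = z * ξ k)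
    (hη : ∀ k : ℤ, η (k + n) = z⁻¹ * η k) :
    ∑ k ∈ Finset.range n, diffOp m d a ξ k * η k =
    ∑ k ∈ Finset.range n, ξ k * diffOpDual m d a η k := by
  have lhs : ∑ k ∈ Finset.range n, diffOp m d a ξ k * η k =
      ∑ i ∈ Finset.range (d + 1), ∑ k ∈ Finset.range n,
        a k (m + i) * ξ (k + (m + i)) * η k := by
    rw [Finset.sum_comm]
    exact Finset.sum_congr rfl fun k _ => by
      simp only [diffOp, LinearMap.coe_mk, AddHom.coe_mk, Finset.sum_mul]
  have rhs : ∑ k ∈ Finset.range n, ξ k * diffOpDual m d a η k =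
      ∑ i ∈ Finset.range (d + 1), ∑ k ∈ Finset.range n,
        ξ k * (a (k - (m + i)) (m + i) * η (k - (m + i))) := by
    rw [Finset.sum_comm]
    exact Finset.sum_congr rfl fun k _ => by
      simp only [diffOpDual, LinearMap.coe_mk, AddHom.coe_mk, Finset.mul_sum]
  rw [lhs, rhs]
  apply Finset.sum_congr rfl
  intro i _
  set j : ℤ := m + i with hj
  set f : ℤ → ℝ := fun k => a k j * ξ (k + j) * η k with hf
  have hfper : ∀ k, f (k + n) = f k := by
    intro k
    simp only [hf]
    have e1 : k + (n:ℤ) + j = (k + j) + n := by ring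
    rw [e1, hξ, hη, hper]
    field_simp
  have : ∑ k ∈ Finset.range n, ξ k * (a (k - j) j * η (k - j)) =
      ∑ k ∈ Finset.range n, f ((k:ℤ) + (-j)) := by
    apply Finset.sum_congr rfl
    intro k _
    simp only [hf]
    have e : (k:ℤ) + -j + j = k := by ring
    rw [e]
    have e2 : (k:ℤ) + -j = k - j := by ring
    rw [e2]
    ring
  rw [this, periodic_sum_shift n f hfper (-j)]

lemma qp_findim (n : ℕ) (hn : 1 ≤ n) (w : ℝ) (hw : w ≠ 0) :
    FiniteDimensional ℝ (quasiPeriodic n w) := by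
  let f : quasiPeriodic n w →ₗ[ℝ] (Fin n → ℝ) :=
    { toFun := fun ξ i => ξ.1 ((i : ℕ) : ℤ)
      map_add' := fun ξ η => rfl
      map_smul' := fun c ξ => rfl }
  apply FiniteDimensional.of_injective f
  rw [← LinearMap.ker_eq_bot, LinearMap.ker_eq_bot']
  intro ξ hξ
  apply Subtype.ext
  apply quasi_eq_zero n hn w hw ξ.1 ξ.2
  intro i hi
  have := congrFun hξ ⟨i, Finset.mem_range.mp hi⟩
  simpa [f] using this

/-- `D` maps `quasiPeriodic n z` into itself. -/
lemma diffOp_maps (n : ℕ) (m : ℤ) (d : ℕ) (a : ℤ → ℤ → ℝ)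
    (hper : ∀ k j : ℤ, a (k + n) j = a k j) (z : ℝ) :
    ∀ ξ ∈ quasiPeriodic n z, diffOp m d a ξ ∈ quasiPeriodic n z := by
  intro ξ hξ
  rw [mem_qp] at hξ ⊢
  intro k
  simp only [diffOp, LinearMap.coe_mk, AddHom.coe_mk, Finset.mul_sum]
  apply Finset.sum_congr rfl
  intro i _
  have e : k + (n:ℤ) + (m + i) = (k + (m + i)) + n := by ring
  rw [e, hξ, hper]
  ring

/-- `D*` maps `quasiPeriodic n z⁻¹` into itself. -/
lemma diffOpDual_maps (n : ℕ) (m : ℤ) (d : ℕ) (a : ℤ → ℤ → ℝ)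
    (hper : ∀ k j : ℤ, a (k + n) j = a k j) (w : ℝ) :
    ∀ η ∈ quasiPeriodic n w, diffOpDual m d a η ∈ quasiPeriodic n w := by
  intro η hη
  rw [mem_qp] at hη ⊢
  intro k
  simp only [diffOpDual, LinearMap.coe_mk, AddHom.coe_mk, Finset.mul_sum]
  apply Finset.sum_congr rfl
  intro i _
  have e : k + (n:ℤ) - (m + i) = (k - (m + i)) + n := by ring
  rw [e, hη, hper]
  ring

lemma exists_ker_ne_zero {V : Type*} [AddCommGroup V] [Module ℝ V] (T : V →ₗ[ℝ] V)
    (h : ¬ Function.Injective T) : ∃ x : V, x ≠ 0 ∧ T x = 0 := by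
  by_contra hc
  push_neg at hc
  apply h
  rw [← LinearMap.ker_eq_bot, LinearMap.ker_eq_bot']
  intro x hx
  by_contra hx0
  exact (hc x hx0) hx

/-- A nonzero real `z` is an eigenvalue of the monodromy of an `n`-periodic properly
bounded difference operator `D` iff `z⁻¹` is an eigenvalue of the monodromy of `D*`. -/
theorem eigenvalue_monodromy_dual (n : ℕ) (hn : 1 ≤ n) (m : ℤ) (d : ℕ) (a : ℤ → ℤ → ℝ)
    (hper : ∀ k j : ℤ, a (k + n) j = a k j)
    (hlow : ∀ k, a k m ≠ 0) (hhigh : ∀ k, a k (m + d) ≠ 0)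
    (z : ℝ) (hz : z ≠ 0) :
    (∃ ξ : ℤ → ℝ, ξ ≠ 0 ∧ ξ ∈ quasiPeriodic n z ∧ diffOp m d a ξ = 0) ↔
      (∃ η : ℤ → ℝ, η ≠ 0 ∧ η ∈ quasiPeriodic n z⁻¹ ∧ diffOpDual m d a η = 0) := by
  have hzi : (z : ℝ)⁻¹ ≠ 0 := inv_ne_zero hz
  constructor
  · rintro ⟨ξ, hξ0, hξq, hξD⟩
    haveI : FiniteDimensional ℝ (quasiPeriodic n z⁻¹) := qp_findim n hn z⁻¹ hzi
    set T := (diffOpDual m d a).restrict (diffOpDual_maps n m d a hper z⁻¹) with hT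
    by_cases hinj : Function.Injective T
    · exfalso
      have hsurj := LinearMap.injective_iff_surjective.mp hinj
      have hne : ∃ i ∈ Finset.range n, ξ (i:ℤ) ≠ 0 := by
        by_contra hc
        push_neg at hc
        exact hξ0 (quasi_eq_zero n hn z hz ξ hξq hc)
      obtain ⟨i, hi, hξi⟩ := hne
      set η0 : ℤ → ℝ := extendQ n z⁻¹ (fun j => if j = i then 1 else 0) with hη0
      have hη0mem : η0 ∈ quasiPeriodic n z⁻¹ :=
        (mem_qp n z⁻¹ η0).mpr (extendQ_mem n hn z⁻¹ hzi _)
      obtain ⟨η', hη'⟩ := hsurj ⟨η0, hη0mem⟩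
      have hval : diffOpDual m d a η'.1 = η0 := congrArg Subtype.val hη'
      have h1 : ∑ k ∈ Finset.range n, ξ (k:ℤ) * η0 (k:ℤ) = 0 := by
        rw [← hval,
          ← adjoint_pairing n m d a hper z hz ξ η'.1 hξq η'.2]
        simp [hξD]
      have h2 : ∑ k ∈ Finset.range n, ξ (k:ℤ) * η0 (k:ℤ) = ξ i := by
        rw [show (∑ k ∈ Finset.range n, ξ (k:ℤ) * η0 (k:ℤ)) =
            ∑ k ∈ Finset.range n, η0 (k:ℤ) * ξ (k:ℤ) from
          Finset.sum_congr rfl fun k _ => mul_comm _ _]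
        exact pair_delta n z⁻¹ ξ i hi
      rw [h2] at h1
      exact hξi h1
    · obtain ⟨x, hx0, hTx⟩ := exists_ker_ne_zero T hinj
      have hD : diffOpDual m d a x.1 = 0 := congrArg Subtype.val hTx
      exact ⟨x.1, fun h => hx0 (Subtype.ext h), x.2, hD⟩
  · rintro ⟨η, hη0, hηq, hηD⟩
    haveI : FiniteDimensional ℝ (quasiPeriodic n z) := qp_findim n hn z hz
    set T := (diffOp m d a).restrict (diffOp_maps n m d a hper z) with hT
    by_cases hinj : Function.Injective T
    · exfalso
      have hsurj := LinearMap.injective_iff_surjective.mp hinj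
      have hne : ∃ i ∈ Finset.range n, η (i:ℤ) ≠ 0 := by
        by_contra hc
        push_neg at hc
        exact hη0 (quasi_eq_zero n hn z⁻¹ hzi η hηq hc)
      obtain ⟨i, hi, hηi⟩ := hne
      set ξ0 : ℤ → ℝ := extendQ n z (fun j => if j = i then 1 else 0) with hξ0
      have hξ0mem : ξ0 ∈ quasiPeriodic n z :=
        (mem_qp n z ξ0).mpr (extendQ_mem n hn z hz _)
      obtain ⟨ξ', hξ'⟩ := hsurj ⟨ξ0, hξ0mem⟩
      have hval : diffOp m d a ξ'.1 = ξ0 := congrArg Subtype.val hξ'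
      have h1 : ∑ k ∈ Finset.range n, ξ0 (k:ℤ) * η (k:ℤ) = 0 := by
        rw [← hval,
          adjoint_pairing n m d a hper z hz ξ'.1 η ξ'.2 hηq]
        simp [hηD]
      have h2 : ∑ k ∈ Finset.range n, ξ0 (k:ℤ) * η (k:ℤ) = η i :=
        pair_delta n z η i hi
      rw [h2] at h1
      exact hηi h1
    · obtain ⟨x, hx0, hTx⟩ := exists_ker_ne_zero T hinj
      have hD : diffOp m d a x.1 = 0 := congrArg Subtype.val hTx
      exact ⟨x.1, fun h => hx0 (Subtype.ext h), x.2, hD⟩
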